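/- A feature 𝓕 is convex if and only if for every filtration F and all u ≤ v, the steady and ranging sets coincide: S^𝓕_F(u ≤ v) = R^𝓕_F(u ≤ v). -/

import Mathlib

open CategoryTheory

universe u v

/-- A feature on a finitely concrete mono category `(C, Φ)`: for each object `X`,
a collection of subsets of the underlying set `Φ.obj X`. -/
def Feature {C : Type u} [Category.{v} C] (Φ : C ⥤ Type v) :=
  ∀ X : C, Set (Set (Φ.obj X))

/-- The steady `𝓕`-sets of a filtration `F` at `(a ≤ b)`. -/
def steadySet {C : Type u} [Category.{v} C] (Φ : C ⥤ Type v) (𝓕 : Feature Φ)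
    (F : ℝ ⥤ C) (a b : ℝ) : Set (Set (Φ.obj (F.obj a))) :=
  {A | ∀ (w : ℝ) (h1 : a ≤ w), w ≤ b → Φ.map (F.map (homOfLE h1)) '' A ∈ 𝓕 (F.obj w)}

/-- The ranging `𝓕`-sets of a filtration `F` at `(a ≤ b)`. -/
def rangingSet {C : Type u} [Category.{v} C] (Φ : C ⥤ Type v) (𝓕 : Feature Φ)
    (F : ℝ ⥤ C) (a b : ℝ) : Set (Set (Φ.obj (F.obj a))) :=
  {A | ∃ (x y : ℝ) (hx : x ≤ a) (_ : b ≤ y) (hy : a ≤ y) (A' : Set (Φ.obj (F.obj x))),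
      A' ∈ 𝓕 (F.obj x) ∧ A = Φ.map (F.map (homOfLE hx)) '' A' ∧
      Φ.map (F.map (homOfLE hy)) '' A ∈ 𝓕 (F.obj y)}

/-- A feature is convex if `(A,X) ∈ 𝓕` and `ι'ι(A,X) ∈ 𝓕` imply `ι(A,X) ∈ 𝓕`. -/
def ConvexFeature {C : Type u} [Category.{v} C] (Φ : C ⥤ Type v) (𝓕 : Feature Φ) : Prop :=
  ∀ {X X' X'' : C} (ι : X ⟶ X') (ι' : X' ⟶ X'') (A : Set (Φ.obj X)),
    A ∈ 𝓕 X → Φ.map (ι ≫ ι') '' A ∈ 𝓕 X'' → Φ.map ι '' A ∈ 𝓕 X'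


section Step

variable {C : Type u} [Category.{v} C] {X X' X'' : C}

/-- objects of the three-step functor on `Fin 3`. -/
def tripleObj (X X' X'' : C) : Fin 3 → C :=
  fun i => if i.val = 0 then X else if i.val = 1 then X' else X''

/-- maps of the three-step functor. -/
def tripleHom (ι : X ⟶ X') (ι' : X' ⟶ X'') :
    ∀ (i j : Fin 3), i ≤ j → (tripleObj X X' X'' i ⟶ tripleObj X X' X'' j)
  | ⟨0,_⟩, ⟨0,_⟩, _ => 𝟙 X
  | ⟨0,_⟩, ⟨1,_⟩, _ => ι
  | ⟨0,_⟩, ⟨2,_⟩, _ => ι ≫ ι'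
  | ⟨1,_⟩, ⟨1,_⟩, _ => 𝟙 X'
  | ⟨1,_⟩, ⟨2,_⟩, _ => ι'
  | ⟨2,_⟩, ⟨2,_⟩, _ => 𝟙 X''
  | ⟨1,_⟩, ⟨0,_⟩, h => absurd h (by simp [Fin.le_def])
  | ⟨2,_⟩, ⟨0,_⟩, h => absurd h (by simp [Fin.le_def])
  | ⟨2,_⟩, ⟨1,_⟩, h => absurd h (by simp [Fin.le_def])

/-- The three-step functor `Fin 3 ⥤ C`. -/
def tripleFunctor (ι : X ⟶ X') (ι' : X' ⟶ X'') : Fin 3 ⥤ C where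
  obj := tripleObj X X' X''
  map {i j} f := tripleHom ι ι' i j f.le
  map_id i := by
    match i with
    | ⟨0,_⟩ => rfl
    | ⟨1,_⟩ => rfl
    | ⟨2,_⟩ => rfl
  map_comp {i j k} f g := by
    match i, j, k with
    | ⟨0,_⟩, ⟨0,_⟩, ⟨0,_⟩ => exact (Category.id_comp _).symm
    | ⟨0,_⟩, ⟨0,_⟩, ⟨1,_⟩ => exact (Category.id_comp _).symm
    | ⟨0,_⟩, ⟨0,_⟩, ⟨2,_⟩ => exact (Category.id_comp _).symm
    | ⟨0,_⟩, ⟨1,_⟩, ⟨1,_⟩ => exact (Category.comp_id _).symm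
    | ⟨0,_⟩, ⟨1,_⟩, ⟨2,_⟩ => rfl
    | ⟨0,_⟩, ⟨2,_⟩, ⟨2,_⟩ => exact (Category.comp_id _).symm
    | ⟨1,_⟩, ⟨1,_⟩, ⟨1,_⟩ => exact (Category.id_comp _).symm
    | ⟨1,_⟩, ⟨1,_⟩, ⟨2,_⟩ => exact (Category.id_comp _).symm
    | ⟨1,_⟩, ⟨2,_⟩, ⟨2,_⟩ => exact (Category.comp_id _).symm
    | ⟨2,_⟩, ⟨2,_⟩, ⟨2,_⟩ => exact (Category.id_comp _).symm
    | ⟨1,_⟩, ⟨0,_⟩, _ => exact absurd f.le (by simp [Fin.le_def])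
    | ⟨2,_⟩, ⟨0,_⟩, _ => exact absurd f.le (by simp [Fin.le_def])
    | ⟨2,_⟩, ⟨1,_⟩, _ => exact absurd f.le (by simp [Fin.le_def])
    | _, ⟨1,_⟩, ⟨0,_⟩ => exact absurd g.le (by simp [Fin.le_def])
    | _, ⟨2,_⟩, ⟨0,_⟩ => exact absurd g.le (by simp [Fin.le_def])
    | _, ⟨2,_⟩, ⟨1,_⟩ => exact absurd g.le (by simp [Fin.le_def])
    | ⟨_+3,hi⟩, _, _ => exact absurd hi (by omega)
    | _, ⟨_+3,hj⟩, _ => exact absurd hj (by omega)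
    | _, _, ⟨_+3,hk⟩ => exact absurd hk (by omega)

/-- step function `ℝ → Fin 3`. -/
noncomputable def stepFun : ℝ → Fin 3 :=
  fun t => if t ≤ 0 then 0 else if t < 2 then 1 else 2

lemma stepFun_mono : Monotone stepFun := by
  intro s t hst
  unfold stepFun
  split_ifs <;> simp_all [Fin.le_def] <;> linarith

lemma stepFun_zero : stepFun 0 = 0 := by simp [stepFun]
lemma stepFun_one : stepFun 1 = 1 := by norm_num [stepFun]
lemma stepFun_two : stepFun 2 = 2 := by norm_num [stepFun]

end Step

section Main

variable {C : Type u} [Category.{v} C] {X X' X'' : C}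

lemma tripleHom_cast (ι : X ⟶ X') (ι' : X' ⟶ X'') (i j i' j' : Fin 3)
    (hi : i = i') (hj : j = j') (h : i ≤ j) :
    tripleHom ι ι' i j h =
      eqToHom (congrArg (tripleObj X X' X'') hi) ≫
        tripleHom ι ι' i' j' (hi ▸ hj ▸ h) ≫
          eqToHom (congrArg (tripleObj X X' X'') hj).symm := by
  subst hi; subst hj
  rw [eqToHom_refl, eqToHom_refl, Category.id_comp, Category.comp_id]

lemma step_exists (ι : X ⟶ X') (ι' : X' ⟶ X'') :
    ∃ (F : ℝ ⥤ C) (e0 : F.obj 0 = X) (e1 : F.obj 1 = X') (e2 : F.obj 2 = X''),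
      F.map (homOfLE (by norm_num : (0:ℝ) ≤ 1)) = eqToHom e0 ≫ ι ≫ eqToHom e1.symm ∧
      F.map (homOfLE (by norm_num : (1:ℝ) ≤ 2)) = eqToHom e1 ≫ ι' ≫ eqToHom e2.symm := by
  refine ⟨stepFun_mono.functor ⋙ tripleFunctor ι ι', ?_, ?_, ?_, ?_, ?_⟩
  · show tripleObj X X' X'' (stepFun 0) = X
    rw [stepFun_zero]; rfl
  · show tripleObj X X' X'' (stepFun 1) = X'
    rw [stepFun_one]; rfl
  · show tripleObj X X' X'' (stepFun 2) = X''
    rw [stepFun_two]; rfl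
  · show tripleHom ι ι' (stepFun 0) (stepFun 1) _ = _
    refine (tripleHom_cast ι ι' _ _ 0 1 stepFun_zero stepFun_one _).trans ?_
    rfl
  · show tripleHom ι ι' (stepFun 1) (stepFun 2) _ = _
    refine (tripleHom_cast ι ι' _ _ 1 2 stepFun_one stepFun_two _).trans ?_
    rfl

end Main


/-- a feature is convex iff steady and ranging sets coincide
for every filtration and all `u ≤ v`. -/
theorem convex_iff_steady_eq_ranging {C : Type u} [Category.{v} C] (Φ : C ⥤ Type v)
    (hfin : ∀ X : C, Finite (Φ.obj X)) (hfaith : Φ.Faithful)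
    (hinj : ∀ {X Y : C} (f : X ⟶ Y), Function.Injective (Φ.map f))
    (hmono : ∀ {X Y : C} (f : X ⟶ Y), Mono f)
    (𝓕 : Feature Φ)
    (hiso : ∀ {X Y : C} (f : X ≅ Y) (A : Set (Φ.obj X)), A ∈ 𝓕 X ↔ Φ.map f.hom '' A ∈ 𝓕 Y) :
    ConvexFeature Φ 𝓕 ↔
      ∀ (F : ℝ ⥤ C) (a b : ℝ), a ≤ b → steadySet Φ 𝓕 F a b = rangingSet Φ 𝓕 F a b := by
  constructor
  · intro hconv F a b hab
    ext A
    constructor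
    · intro hA
      refine ⟨a, b, le_rfl, le_rfl, hab, A, ?_, ?_, hA b hab le_rfl⟩
      · have h1 : F.map (homOfLE (le_refl a)) = 𝟙 (F.obj a) := by
          rw [show homOfLE (le_refl a) = 𝟙 a from rfl, CategoryTheory.Functor.map_id]
        have := hA a le_rfl hab
        rw [h1] at this
        simpa using this
      · have h1 : F.map (homOfLE (le_refl a)) = 𝟙 (F.obj a) := by
          rw [show homOfLE (le_refl a) = 𝟙 a from rfl, CategoryTheory.Functor.map_id]
        rw [h1]
        simp
    · rintro ⟨x, y, hx, hby, hy, A', hA', hAeq, hAy⟩ w haw hwb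
      have hwy : w ≤ y := hwb.trans hby
      have key : Φ.map (F.map (homOfLE (hx.trans haw))) '' A' ∈ 𝓕 (F.obj w) := by
        refine hconv (F.map (homOfLE (hx.trans haw))) (F.map (homOfLE hwy)) A' hA' ?_
        have hcomp : F.map (homOfLE (hx.trans haw)) ≫ F.map (homOfLE hwy) =
            F.map (homOfLE hx) ≫ F.map (homOfLE hy) := by
          rw [← F.map_comp, ← F.map_comp, homOfLE_comp, homOfLE_comp]
        rw [hcomp, Functor.map_comp, types_comp, Set.image_comp, ← hAeq]
        exact hAy
      have himg : Φ.map (F.map (homOfLE haw)) '' A =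
          Φ.map (F.map (homOfLE (hx.trans haw))) '' A' := by
        rw [hAeq, ← Set.image_comp, ← types_comp, ← Functor.map_comp, ← Functor.map_comp, homOfLE_comp]
      rw [himg]
      exact key
  · intro h
    refine fun {X X' X''} ι ι' A hA hA2 => ?_
    obtain ⟨F, e0, e1, e2, hm01, hm12⟩ := step_exists ι ι'
    subst e0; subst e1; subst e2
    simp only [eqToHom_refl, Category.id_comp, Category.comp_id] at hm01 hm12
    have hsr := h F 1 1 le_rfl
    have hrang : Φ.map ι '' A ∈ rangingSet Φ 𝓕 F 1 1 := by
      refine ⟨0, 2, by norm_num, by norm_num, by norm_num, A, hA, ?_, ?_⟩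
      · rw [hm01]
      · have hc : F.map (homOfLE (by norm_num : (1:ℝ) ≤ 2)) = F.map (homOfLE (by norm_num : (1:ℝ) ≤ 2)) := rfl
        rw [hm12, ← Set.image_comp, ← types_comp, ← Functor.map_comp]
        exact hA2
    have hst : Φ.map ι '' A ∈ steadySet Φ 𝓕 F 1 1 := hsr ▸ hrang
    have := hst 1 le_rfl le_rfl
    have h1 : F.map (homOfLE (le_refl (1:ℝ))) = 𝟙 (F.obj 1) := by
      rw [show homOfLE (le_refl (1:ℝ)) = 𝟙 (1:ℝ) from rfl, CategoryTheory.Functor.map_id]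
    rw [h1] at this
    simpa using this
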